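/- Let k ≥ 1 and let m, n be integers with 1 ≤ m ≤ k and 2 ≤ n ≤ k. Let G be a finite abelian group (written additively) containing the following elements: t_1,…,t_{r_α} with 2·t_i = 0; for each s = 1,…,m, elements a_{s,1},…,a_{s,r_s}, each of order exactly 2s+1; elements b_1,…,b_{r_ω}, each of order greater than 2k+1; for each h = 2,…,n, elements c_{h,1},…,c_{h,z_h}, each of order exactly h+1; and elements d_1,…,d_{z_ω}, each of order greater than k+1. Suppose that every g ∈ G can be written as g = Σ_i ε_i·t_i + Σ_{s,j} α_{s,j}·a_{s,j} + Σ_j β_j·b_j + Σ_{h,j} γ_{h,j}·c_{h,j} + Σ_j δ_j·d_j with ε_i, γ_{h,j}, δ_j ∈ ℕ, α_{s,j}, β_j ∈ ℤ, and Σ ε_i + Σ |α_{s,j}| + Σ |β_j| + Σ γ_{h,j} + Σ δ_j ≤ k. Then |G| ≤ Σ C(r_α, i_α) · C(r_ω, i_ω) · 2^{i_ω} · Π_{h=1}^{m} [ 2^{|σ^{(h)}|} · r_h! / ( σ^{(h)}_1! ⋯ σ^{(h)}_h! · (r_h − |σ^{(h)}|)! ) ] · Π_{h=2}^{n} [ z_h!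 / ( τ^{(h)}_1! ⋯ τ^{(h)}_h! · (z_h − |τ^{(h)}|)! ) ] · C( z_ω + k − i_α − Σ_{h=1}^{m} Σ_{t=1}^{h} t·σ^{(h)}_t − Σ_{h=2}^{n} Σ_{t=1}^{h} t·τ^{(h)}_t , i_ω + z_ω ), where the outer sum ranges over all i_α ∈ {0,…,r_α}, i_ω ∈ {0,…,r_ω}, all tuples σ^{(h)} = (σ^{(h)}_1,…,σ^{(h)}_h) ∈ ℕ^h with |σ^{(h)}| := σ^{(h)}_1+⋯+σ^{(h)}_h ≤ r_h for h = 1,…,m, and all tuples τ^{(h)} = (τ^{(h)}_1,…,τ^{(h)}_h) ∈ ℕ^h with |τ^{(h)}| ≤ z_h for h = 2,…,n; here C(a,b) denotes the binomial coefficient, with the convention that C(a,b) = 0 whenever a is negative or a < b. -/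

import Mathlib

open Finset
open scoped Classical


private noncomputable def TT {ι : Type*} [Fintype ι] (U : Finset ι) {h : ℕ} (σ : Fin h → ℕ) :
    Finset (Fin h → Finset ι) :=
  (univ : Finset (Fin h → Finset ι)).filter
    (fun S => (∀ i, S i ⊆ U ∧ (S i).card = σ i) ∧
      ∀ i j, i ≠ j → Disjoint (S i) (S j))

private lemma TT_card {ι : Type*} [Fintype ι] :
    ∀ (h : ℕ) (U : Finset ι) (σ : Fin h → ℕ), (∑ i, σ i) ≤ U.card →
    (TT U σ).card * ((∏ i, (σ i).factorial) * (U.card - ∑ i, σ i).factorial)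
      = U.card.factorial := by
  intro h
  induction h with
  | zero =>
    intro U σ _
    have h1 : TT U σ = univ := by
      ext S
      simp only [TT, mem_filter, mem_univ, true_and, iff_true]
      exact ⟨fun i => i.elim0, fun i => i.elim0⟩
    have h2 : Fintype.card (Fin 0 → Finset ι) = 1 := by simp
    rw [h1, Finset.card_univ, h2]
    simp
  | succ h ih =>
    intro U σ hle
    have hσ0 : σ 0 ≤ U.card := le_trans (by
      calc σ 0 ≤ ∑ i, σ i := Finset.single_le_sum (fun _ _ => Nat.zero_le _) (mem_univ 0)
      ) hle
    have hmaps : ∀ S ∈ TT U σ, S 0 ∈ U.powersetCard (σ 0) := by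
      intro S hS
      simp only [TT, mem_filter] at hS
      exact Finset.mem_powersetCard.2 ⟨(hS.2.1 0).1, (hS.2.1 0).2⟩
    have hcard := Finset.card_eq_sum_card_fiberwise hmaps
    have hfib : ∀ S0 ∈ U.powersetCard (σ 0),
        ((TT U σ).filter (fun S => S 0 = S0)).card
          = (TT (U \ S0) (fun i => σ i.succ)).card := by
      intro S0 hS0
      rw [Finset.mem_powersetCard] at hS0
      apply Finset.card_bij (fun S _ => Fin.tail S)
      · intro S hS
        simp only [mem_filter, TT, mem_univ, true_and] at hS ⊢
        obtain ⟨⟨hsub, hdisj⟩, h0⟩ := hS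
        refine ⟨fun i => ⟨?_, (hsub i.succ).2⟩, fun i j hij => hdisj _ _ (by
          simpa using hij)⟩
        rw [Finset.subset_sdiff]
        exact ⟨(hsub i.succ).1, by rw [← h0]; exact hdisj _ _ (Fin.succ_ne_zero i)⟩
      · intro S hS S' hS' heq
        simp only [mem_filter] at hS hS'
        have h00 := hS.2.trans hS'.2.symm
        funext i
        rcases Fin.eq_zero_or_eq_succ i with rfl | ⟨j, rfl⟩
        · exact h00
        · exact congrFun heq j
      · intro T hT
        simp only [TT, mem_filter, mem_univ, true_and] at hT
        obtain ⟨hsub, hdisj⟩ := hT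
        refine ⟨Fin.cons S0 T, ?_, rfl⟩
        simp only [TT, mem_filter, mem_univ, true_and, Fin.cons_zero, and_true]
        refine ⟨fun i => ?_, fun i j hij => ?_⟩
        · rcases Fin.eq_zero_or_eq_succ i with rfl | ⟨j, rfl⟩
          · exact ⟨hS0.1, hS0.2⟩
          · simp only [Fin.cons_succ]
            exact ⟨((Finset.subset_sdiff.1 (hsub j).1).1), (hsub j).2⟩
        · rcases Fin.eq_zero_or_eq_succ i with rfl | ⟨i', rfl⟩ <;>
            rcases Fin.eq_zero_or_eq_succ j with rfl | ⟨j', rfl⟩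
          · exact absurd rfl hij
          · simp only [Fin.cons_zero, Fin.cons_succ]
            exact ((Finset.subset_sdiff.1 (hsub j').1).2).symm
          · simp only [Fin.cons_zero, Fin.cons_succ]
            exact (Finset.subset_sdiff.1 (hsub i').1).2
          · simp only [Fin.cons_succ]
            exact hdisj _ _ (by simpa using hij)
    have hsum : ∑ i, σ i = σ 0 + ∑ i : Fin h, σ i.succ := Fin.sum_univ_succ σ
    have htail : ∑ i : Fin h, σ i.succ ≤ U.card - σ 0 :=
      Nat.le_sub_of_add_le (by rw [Nat.add_comm, ← hsum]; exact hle)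
    calc (TT U σ).card * ((∏ i, (σ i).factorial) * (U.card - ∑ i, σ i).factorial)
        = ∑ S0 ∈ U.powersetCard (σ 0),
            ((TT (U \ S0) (fun i => σ i.succ)).card *
              ((∏ i : Fin h, (σ i.succ).factorial) *
                ((U.card - σ 0) - ∑ i : Fin h, σ i.succ).factorial)) * (σ 0).factorial := by
          rw [hcard, Finset.sum_mul]
          apply Finset.sum_congr rfl
          intro S0 hS0
          rw [hfib S0 hS0, Fin.prod_univ_succ]
          have heq2 : U.card - ∑ i, σ i = (U.card - σ 0) - ∑ i : Fin h, σ i.succ := by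
            rw [hsum, Nat.sub_sub]
          rw [heq2]; ring
      _ = ∑ _S0 ∈ U.powersetCard (σ 0), (U.card - σ 0).factorial * (σ 0).factorial := by
          apply Finset.sum_congr rfl
          intro S0 hS0
          have hU2 : (U \ S0).card = U.card - σ 0 := by
            rw [Finset.mem_powersetCard] at hS0
            rw [Finset.card_sdiff_of_subset hS0.1, hS0.2]
          rw [← hU2] at htail ⊢
          rw [ih (U \ S0) (fun i => σ i.succ) htail]
      _ = U.card.choose (σ 0) * (σ 0).factorial * (U.card - σ 0).factorial := by
          rw [Finset.sum_const, Finset.card_powersetCard, smul_eq_mul]; ring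
      _ = U.card.factorial := Nat.choose_mul_factorial_mul_factorial hσ0

private lemma TT_def {ι : Type*} [Fintype ι] (U : Finset ι) {h : ℕ} (σ : Fin h → ℕ) :
    TT U σ = (univ : Finset (Fin h → Finset ι)).filter
      (fun S => (∀ i, S i ⊆ U ∧ (S i).card = σ i) ∧
        ∀ i j, i ≠ j → Disjoint (S i) (S j)) := rfl

private lemma TT_card_div {ι : Type*} [Fintype ι] (h : ℕ) (U : Finset ι) (σ : Fin h → ℕ)
    (hle : (∑ i, σ i) ≤ U.card) :
    (TT U σ).card
      = U.card.factorial / ((∏ i, (σ i).factorial) * (U.card - ∑ i, σ i).factorial) := by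
  symm
  apply Nat.div_eq_of_eq_mul_left
  · positivity
  · exact (TT_card h U σ hle).symm

/-- counting `ℕ`-valued functions with prescribed fibers -/
private lemma count_nfun_le {ι : Type*} [Fintype ι] (h : ℕ) (τ : Fin h → ℕ)
    (hle : ∑ i, τ i ≤ Fintype.card ι) (F : Finset (ι → ℕ))
    (hF : ∀ f ∈ F, ∀ j, f j ≤ h)
    (hprof : ∀ f ∈ F, ∀ i : Fin h, (univ.filter (fun j => f j = (i : ℕ) + 1)).card = τ i) :
    F.card ≤ (Fintype.card ι).factorial /
      ((∏ i, (τ i).factorial) * (Fintype.card ι - ∑ i, τ i).factorial) := by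
  have hU : (univ : Finset ι).card = Fintype.card ι := Finset.card_univ
  rw [← hU, ← TT_card_div h univ τ (by rwa [hU])]
  apply Finset.card_le_card_of_injOn (fun f (i : Fin h) => univ.filter (fun j => f j = (i : ℕ) + 1))
  · intro f hf
    rw [TT_def]
    simp only [Finset.mem_coe, mem_filter, mem_univ, true_and]
    refine ⟨fun i => ⟨Finset.filter_subset _ _, hprof f hf i⟩, fun i j hij => ?_⟩
    rw [Finset.disjoint_filter]
    intro x _ hfi hfj
    exact hij (by rw [Fin.ext_iff]; omega)
  · intro f hf g hg heq
    have hfib : ∀ i : Fin h, univ.filter (fun j' => f j' = (i : ℕ) + 1)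
        = univ.filter (fun j' => g j' = (i : ℕ) + 1) := fun i => congrFun heq i
    funext j
    have hfj := hF f hf j
    have hgj := hF g hg j
    by_cases h0 : f j = 0
    · by_contra hne
      have hgpos : g j ≠ 0 := fun hg0 => hne (by rw [h0, hg0])
      have hi : (⟨g j - 1, by omega⟩ : Fin h).val + 1 = g j := by simp; omega
      have : j ∈ univ.filter (fun j' => g j' = (⟨g j - 1, by omega⟩ : Fin h).val + 1) := by
        simp only [mem_filter, mem_univ, true_and]; omega
      rw [← hfib ⟨g j - 1, by omega⟩] at this
      simp only [mem_filter, mem_univ, true_and] at this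
      omega
    · have hi : j ∈ univ.filter (fun j' => f j' = (⟨f j - 1, by omega⟩ : Fin h).val + 1) := by
        simp only [mem_filter, mem_univ, true_and]; omega
      rw [hfib ⟨f j - 1, by omega⟩] at hi
      simp only [mem_filter, mem_univ, true_and] at hi
      omega

/-- counting `ℤ`-valued functions with prescribed absolute-value fibers -/
private lemma count_zfun_le {ι : Type*} [Fintype ι] (h : ℕ) (σ : Fin h → ℕ)
    (hle : ∑ i, σ i ≤ Fintype.card ι) (F : Finset (ι → ℤ))
    (hF : ∀ f ∈ F, ∀ j, (f j).natAbs ≤ h)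
    (hprof : ∀ f ∈ F, ∀ i : Fin h,
      (univ.filter (fun j => (f j).natAbs = (i : ℕ) + 1)).card = σ i) :
    F.card ≤ 2 ^ (∑ i, σ i) * ((Fintype.card ι).factorial /
      ((∏ i, (σ i).factorial) * (Fintype.card ι - ∑ i, σ i).factorial)) := by
  have hU : (univ : Finset ι).card = Fintype.card ι := Finset.card_univ
  set Sf : (ι → ℤ) → (Fin h → Finset ι) :=
    fun f i => univ.filter (fun j => (f j).natAbs = (i : ℕ) + 1) with hSf
  have key : F.card ≤ 2 ^ (∑ i, σ i) * (F.image Sf).card := by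
    apply Finset.card_le_mul_card_image
    intro S hS
    rw [Finset.mem_image] at hS
    obtain ⟨f0, hf0, rfl⟩ := hS
    -- fiber injects into powerset of the union
    have hdisj : ∀ i ∈ (univ : Finset (Fin h)), ∀ j ∈ (univ : Finset (Fin h)), i ≠ j →
        Disjoint (Sf f0 i) (Sf f0 j) := by
      intro i _ j _ hij
      rw [hSf]
      rw [Finset.disjoint_filter]
      intro x _ hfi hfj
      exact hij (by rw [Fin.ext_iff]; omega)
    have hcardU : (univ.biUnion (Sf f0)).card = ∑ i, σ i := by
      rw [Finset.card_biUnion hdisj]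
      exact Finset.sum_congr rfl (fun i _ => hprof f0 hf0 i)
    calc (F.filter (fun f => Sf f = Sf f0)).card
        ≤ ((univ.biUnion (Sf f0)).powerset).card := by
          apply Finset.card_le_card_of_injOn
            (fun f => (univ.biUnion (Sf f0)).filter (fun j => 0 < f j))
          · intro f _
            exact Finset.mem_powerset.2 (Finset.filter_subset _ _)
          · intro f hf g hg heq
            simp only [Finset.coe_filter, Set.mem_setOf_eq, Finset.mem_filter] at hf hg
            obtain ⟨hfF, hfS⟩ := hf
            obtain ⟨hgF, hgS⟩ := hg
            have heq' : (univ.biUnion (Sf f0)).filter (fun j => 0 < f j)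
                = (univ.biUnion (Sf f0)).filter (fun j => 0 < g j) := heq
            funext j
            have habs : (f j).natAbs = (g j).natAbs := by
              have h1 : ∀ i : Fin h, ((f j).natAbs = (i : ℕ) + 1 ↔ (g j).natAbs = (i : ℕ) + 1) := by
                intro i
                have e1 : Sf f i = Sf g i := by rw [hfS, hgS]
                have := Finset.ext_iff.1 e1 j
                simpa [hSf] using this
              have hfb := hF f hfF j
              have hgb := hF g hgF j
              rcases Nat.eq_zero_or_pos (f j).natAbs with hz | hp
              · rcases Nat.eq_zero_or_pos (g j).natAbs with hz2 | hp2
                · omega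
                · have := (h1 ⟨(g j).natAbs - 1, by omega⟩).2 (by simp; omega)
                  simp at this; omega
              · have := (h1 ⟨(f j).natAbs - 1, by omega⟩).1 (by simp; omega)
                simp at this; omega
            rcases Nat.eq_zero_or_pos (f j).natAbs with hz | hp
            · omega
            · have hjmem : j ∈ univ.biUnion (Sf f0) := by
                rw [← hfS]
                rw [Finset.mem_biUnion]
                refine ⟨⟨(f j).natAbs - 1, by have := hF f hfF j; omega⟩, mem_univ _, ?_⟩
                simp [hSf]; omega
              have hpos : (0 < f j) ↔ (0 < g j) := by
                constructor
                · intro hh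
                  have : j ∈ (univ.biUnion (Sf f0)).filter (fun j' => 0 < f j') := by
                    simp only [Finset.mem_filter]; exact ⟨hjmem, hh⟩
                  rw [heq'] at this
                  exact (Finset.mem_filter.1 this).2
                · intro hh
                  have : j ∈ (univ.biUnion (Sf f0)).filter (fun j' => 0 < g j') := by
                    simp only [Finset.mem_filter]; exact ⟨hjmem, hh⟩
                  rw [← heq'] at this
                  exact (Finset.mem_filter.1 this).2
              omega
      _ = 2 ^ (∑ i, σ i) := by rw [Finset.card_powerset, hcardU]
  refine key.trans (Nat.mul_le_mul_left _ ?_)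
  rw [← hU, ← TT_card_div h univ σ (by rwa [hU])]
  apply Finset.card_le_card
  intro S hS
  rw [Finset.mem_image] at hS
  obtain ⟨f, hf, rfl⟩ := hS
  rw [TT_def]
  simp only [mem_filter, mem_univ, true_and]
  refine ⟨fun i => ⟨Finset.filter_subset _ _, hprof f hf i⟩, fun i j hij => ?_⟩
  rw [hSf, Finset.disjoint_filter]
  intro x _ hfi hfj
  exact hij (by rw [Fin.ext_iff]; omega)


/-- stars and bars bound: functions with bounded sum -/
private lemma count_sum_le {q B : ℕ} (F : Finset (Fin q → ℕ)) (hF : ∀ f ∈ F, ∑ i, f i ≤ B) :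
    F.card ≤ (B + q).choose q := by
  set msetOf : (Fin q → ℕ) → Multiset (Fin (q + 1)) := fun f =>
    (B - ∑ i, f i) • ({0} : Multiset (Fin (q + 1))) + ∑ i, f i • ({i.succ} : Multiset (Fin (q + 1)))
    with hmset
  have hcount : ∀ (f : Fin q → ℕ) (i : Fin q), Multiset.count i.succ (msetOf f) = f i := by
    intro f i
    rw [hmset]
    simp only []
    rw [Multiset.count_add, Multiset.count_nsmul, Multiset.count_singleton]
    rw [if_neg (Fin.succ_ne_zero i), mul_zero, zero_add]
    rw [Multiset.count_sum']
    rw [Finset.sum_eq_single i]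
    · rw [Multiset.count_nsmul, Multiset.count_singleton, if_pos rfl, mul_one]
    · intro j _ hji
      rw [Multiset.count_nsmul, Multiset.count_singleton,
        if_neg (fun hh => hji (Fin.succ_injective _ hh).symm), mul_zero]
    · intro hh; exact absurd (mem_univ i) hh
  have hcard : F.card ≤ ((univ : Finset (Sym (Fin (q + 1)) B)).image Sym.toMultiset).card := by
    apply Finset.card_le_card_of_injOn msetOf
    · intro f hf
      rw [Finset.mem_coe, Finset.mem_image]
      refine ⟨⟨msetOf f, ?_⟩, mem_univ _, rfl⟩
      rw [hmset]
      show Multiset.card ((B - ∑ i, f i) • ({0} : Multiset (Fin (q + 1)))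
          + ∑ i, f i • ({i.succ} : Multiset (Fin (q + 1)))) = B
      rw [Multiset.card_add, Multiset.card_sum]
      simp only [Multiset.card_nsmul, Multiset.card_singleton, mul_one]
      have := hF f hf
      omega
    · intro f hf g hg heq
      funext i
      rw [← hcount f i, ← hcount g i, heq]
  calc F.card ≤ _ := hcard
    _ ≤ Fintype.card (Sym (Fin (q + 1)) B) := by
        rw [← Finset.card_univ]; exact Finset.card_image_le
    _ = (B + q).choose q := by
        rw [Sym.card_sym_eq_choose]
        have h1 : Fintype.card (Fin (q + 1)) + B - 1 = B + q := by
          rw [Fintype.card_fin]; omega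
        rw [h1]
        have h2 : B + q - B = q := by omega
        have h3 := Nat.choose_symm (show B ≤ B + q by omega)
        rw [h2] at h3
        exact h3.symm

private lemma count_bd_le {rω zω k w0 iω : ℕ}
    (F : Finset ((Fin rω → ℤ) × (Fin zω → ℕ)))
    (hsupp : ∀ p ∈ F, ((univ : Finset (Fin rω)).filter (fun j => p.1 j ≠ 0)).card = iω)
    (hsum : ∀ p ∈ F, w0 + ((∑ j, (p.1 j).natAbs) + ∑ j, p.2 j) ≤ k) :
    F.card ≤ rω.choose iω * (2 ^ iω * (zω + k - w0).choose (iω + zω)) := by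
  rcases Finset.eq_empty_or_nonempty F with rfl | ⟨p₀, hp₀⟩
  · simp
  have hw0k : w0 ≤ k := le_trans (Nat.le_add_right _ _) (hsum p₀ hp₀)
  set C := (zω + k - w0).choose (iω + zω) with hC
  set suppF : (Fin rω → ℤ) × (Fin zω → ℕ) → Finset (Fin rω) :=
    fun p => (univ : Finset (Fin rω)).filter (fun j => p.1 j ≠ 0) with hsuppF
  have key : F.card ≤ (2 ^ iω * C) * (F.image suppF).card := by
    apply Finset.card_le_mul_card_image
    intro S hS
    rw [Finset.mem_image] at hS
    obtain ⟨p0, hp0, rfl⟩ := hS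
    have hScard : (suppF p0).card = iω := hsupp p0 hp0
    set S := suppF p0
    set posF : (Fin rω → ℤ) × (Fin zω → ℕ) → Finset (Fin rω) :=
      fun p => S.filter (fun j => 0 < p.1 j) with hposF
    have step : (F.filter (fun p => suppF p = S)).card ≤ C * ((F.filter (fun p => suppF p = S)).image posF).card := by
      apply Finset.card_le_mul_card_image
      intro P hP
      -- fiber over (S, P): inject into functions with bounded sum
      set e := S.orderIsoOfFin hScard with he
      set gmap : (Fin rω → ℤ) × (Fin zω → ℕ) → (Fin (iω + zω) → ℕ) :=
        fun p => Fin.append (fun i => (p.1 ((e i) : Fin rω)).natAbs - 1) p.2 with hgmap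
      set FSP := (F.filter (fun p => suppF p = S)).filter (fun p => posF p = P) with hFSP
      have hinj : Set.InjOn gmap FSP := by
        intro p hp p' hp' heq
        simp only [hFSP, Finset.coe_filter, Set.mem_setOf_eq, Finset.mem_filter] at hp hp'
        obtain ⟨⟨hpF, hpS⟩, hpP⟩ := hp
        obtain ⟨⟨hp'F, hp'S⟩, hp'P⟩ := hp'
        have h2 : p.2 = p'.2 := by
          funext j
          have := congrFun heq (Fin.natAdd iω j)
          simpa [hgmap, Fin.append_right] using this
        have h1 : p.1 = p'.1 := by
          funext j
          by_cases hj : j ∈ S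
          · set i := e.symm ⟨j, hj⟩ with hi
            have hei : ((e i : S) : Fin rω) = j := by rw [hi]; simp
            have := congrFun heq (Fin.castAdd zω i)
            simp only [hgmap, Fin.append_left] at this
            rw [hei] at this
            have hpj : p.1 j ≠ 0 := by
              have hm : j ∈ suppF p := by rw [hpS]; exact hj
              exact (Finset.mem_filter.1 hm).2
            have hp'j : p'.1 j ≠ 0 := by
              have hm : j ∈ suppF p' := by rw [hp'S]; exact hj
              exact (Finset.mem_filter.1 hm).2
            have hpos : (0 < p.1 j) ↔ (0 < p'.1 j) := by
              constructor
              · intro hh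
                have : j ∈ posF p := Finset.mem_filter.2 ⟨hj, hh⟩
                rw [hpP, ← hp'P] at this
                exact (Finset.mem_filter.1 this).2
              · intro hh
                have : j ∈ posF p' := Finset.mem_filter.2 ⟨hj, hh⟩
                rw [hp'P, ← hpP] at this
                exact (Finset.mem_filter.1 this).2
            omega
          · have hz : p.1 j = 0 := by
              by_contra hz
              exact hj (hpS ▸ Finset.mem_filter.2 ⟨mem_univ _, hz⟩)
            have hz' : p'.1 j = 0 := by
              by_contra hz
              exact hj (hp'S ▸ Finset.mem_filter.2 ⟨mem_univ _, hz⟩)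
            rw [hz, hz']
        exact Prod.ext h1 h2
      have hsumb : ∀ p ∈ FSP, ∑ l, gmap p l ≤ k - w0 - iω := by
        intro p hp
        simp only [hFSP, Finset.mem_filter] at hp
        obtain ⟨⟨hpF, hpS⟩, _⟩ := hp
        have hsplit : ∑ l, gmap p l
            = (∑ i : Fin iω, ((p.1 ((e i) : Fin rω)).natAbs - 1)) + ∑ j, p.2 j := by
          rw [hgmap]
          simp only []
          rw [Fin.sum_univ_add]
          simp [Fin.append_left, Fin.append_right]
        have hge1 : ∀ i : Fin iω, 1 ≤ (p.1 ((e i) : Fin rω)).natAbs := by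
          intro i
          have hmem : ((e i) : Fin rω) ∈ suppF p := by rw [hpS]; exact (e i).2
          have := (Finset.mem_filter.1 hmem).2
          omega
        have hsum1 : (∑ i : Fin iω, ((p.1 ((e i) : Fin rω)).natAbs - 1)) + iω
            = ∑ i : Fin iω, (p.1 ((e i) : Fin rω)).natAbs := by
          calc _ = ∑ i : Fin iω, ((p.1 ((e i) : Fin rω)).natAbs - 1 + 1) := by
                rw [Finset.sum_add_distrib]; simp
            _ = _ := Finset.sum_congr rfl (fun i _ => by have := hge1 i; omega)
        have hsum2 : ∑ i : Fin iω, (p.1 ((e i) : Fin rω)).natAbs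
            = ∑ j ∈ S, (p.1 j).natAbs := by
          rw [← Finset.sum_coe_sort S (fun j => (p.1 j).natAbs)]
          exact Fintype.sum_equiv e.toEquiv _ _ (fun i => rfl)
        have hsub : ∑ j ∈ S, (p.1 j).natAbs ≤ ∑ j, (p.1 j).natAbs :=
          Finset.sum_le_sum_of_subset (Finset.subset_univ S)
        have := hsum p hpF
        omega
      rcases Finset.eq_empty_or_nonempty FSP with hemp | ⟨p1, hp1⟩
      · rw [hemp]; simp
      have hp1' := hp1
      simp only [hFSP, Finset.mem_filter] at hp1'
      obtain ⟨⟨hp1F, hp1S⟩, _⟩ := hp1'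
      have hiwk : w0 + iω ≤ k := by
        have h1 : ∀ j ∈ S, 1 ≤ (p1.1 j).natAbs := by
          intro j hj
          have hm : j ∈ suppF p1 := by rw [hp1S]; exact hj
          have := (Finset.mem_filter.1 hm).2
          omega
        have h2 : iω ≤ ∑ j ∈ S, (p1.1 j).natAbs := by
          rw [← hScard]
          calc S.card = ∑ _j ∈ S, 1 := by simp
            _ ≤ ∑ j ∈ S, (p1.1 j).natAbs := Finset.sum_le_sum h1
        have h3 : (∑ j ∈ S, (p1.1 j).natAbs) ≤ ∑ j, (p1.1 j).natAbs :=
          Finset.sum_le_sum_of_subset (Finset.subset_univ S)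
        have := hsum p1 hp1F
        omega
      calc FSP.card = (FSP.image gmap).card := (Finset.card_image_of_injOn hinj).symm
        _ ≤ ((k - w0 - iω) + (iω + zω)).choose (iω + zω) := by
            apply count_sum_le
            intro g hg
            rw [Finset.mem_image] at hg
            obtain ⟨p, hp, rfl⟩ := hg
            exact hsumb p hp
        _ ≤ C := by
            rw [hC]
            apply Nat.choose_le_choose
            omega
    have himg2 : ((F.filter (fun p => suppF p = S)).image posF).card ≤ 2 ^ iω := by
      calc _ ≤ S.powerset.card := by
            apply Finset.card_le_card
            intro P hP
            rw [Finset.mem_image] at hP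
            obtain ⟨p, _, rfl⟩ := hP
            exact Finset.mem_powerset.2 (Finset.filter_subset _ _)
        _ = 2 ^ iω := by rw [Finset.card_powerset, hScard]
    calc (F.filter (fun p => suppF p = S)).card
        ≤ C * ((F.filter (fun p => suppF p = S)).image posF).card := step
      _ ≤ C * 2 ^ iω := Nat.mul_le_mul_left _ himg2
      _ = 2 ^ iω * C := Nat.mul_comm _ _
  have himg : (F.image suppF).card ≤ rω.choose iω := by
    calc _ ≤ ((univ : Finset (Fin rω)).powersetCard iω).card := by
          apply Finset.card_le_card
          intro S hS
          rw [Finset.mem_image] at hS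
          obtain ⟨p, hp, rfl⟩ := hS
          exact Finset.mem_powersetCard.2 ⟨Finset.subset_univ _, hsupp p hp⟩
      _ = rω.choose iω := by rw [Finset.card_powersetCard, Finset.card_univ, Fintype.card_fin]
  calc F.card ≤ (2 ^ iω * C) * (F.image suppF).card := key
    _ ≤ (2 ^ iω * C) * rω.choose iω := Nat.mul_le_mul_left _ himg
    _ = rω.choose iω * (2 ^ iω * C) := Nat.mul_comm _ _

private lemma nsmul_reduce {G : Type*} [AddCommGroup G] (g : G) (o : ℕ) (ho : o • g = 0)
    (x : ℕ) : x • g = (x % o) • g := by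
  conv_lhs => rw [← Nat.div_add_mod x o]
  rw [add_nsmul, mul_nsmul, ho, smul_zero, zero_add]

private lemma zsmul_reduce {G : Type*} [AddCommGroup G] (g : G) (o : ℕ) (ho : o • g = 0)
    (x y : ℤ) (hxy : (o : ℤ) ∣ (y - x)) : x • g = y • g := by
  obtain ⟨q, hq⟩ := hxy
  have hy : y = x + (o : ℤ) * q := by linarith
  rw [hy, add_zsmul, mul_comm, mul_zsmul, natCast_zsmul, ho, smul_zero, add_zero]

private lemma bal_spec (h : ℕ) (x : ℤ) :
    -(h : ℤ) ≤ (x + h) % (2 * h + 1) - h ∧ (x + h) % (2 * h + 1) - h ≤ h ∧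
      ((x + h) % (2 * h + 1) - h).natAbs ≤ x.natAbs ∧
      ((2 * h + 1 : ℕ) : ℤ) ∣ (((x + h) % (2 * h + 1) - h) - x) := by
  have hpos : (0 : ℤ) < 2 * (h : ℤ) + 1 := by positivity
  have hb0 : 0 ≤ (x + h) % (2 * h + 1) := Int.emod_nonneg _ (by omega)
  have hb1 : (x + h) % (2 * h + 1) < 2 * h + 1 := Int.emod_lt_of_pos _ hpos
  refine ⟨by omega, by omega, ?_, ?_⟩
  · by_cases hx : -(h : ℤ) ≤ x ∧ x ≤ h
    · have : (x + h) % (2 * h + 1) = x + h := Int.emod_eq_of_lt (by omega) (by omega)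
      omega
    · omega
  · refine ⟨-((x + h) / (2 * h + 1)), ?_⟩
    rw [Int.emod_def]
    push_cast
    ring

private lemma fiber_card_sum_le {ι : Type*} [Fintype ι] (h : ℕ) (v : ι → ℕ) :
    ∑ i : Fin h, (univ.filter (fun j => v j = (i : ℕ) + 1)).card ≤ Fintype.card ι := by
  have hdisj : ∀ i ∈ (univ : Finset (Fin h)), ∀ i' ∈ (univ : Finset (Fin h)), i ≠ i' →
      Disjoint (univ.filter (fun j => v j = (i : ℕ) + 1))
        (univ.filter (fun j => v j = (i' : ℕ) + 1)) := by
    intro i _ i' _ hii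
    rw [Finset.disjoint_filter]
    intro j _ hji hji'
    exact hii (by rw [Fin.ext_iff]; omega)
  calc ∑ i : Fin h, (univ.filter (fun j => v j = (i : ℕ) + 1)).card
      = (univ.biUnion (fun i : Fin h => univ.filter (fun j => v j = (i : ℕ) + 1))).card :=
        (Finset.card_biUnion hdisj).symm
    _ ≤ (univ : Finset ι).card := Finset.card_le_card (Finset.subset_univ _)
    _ = Fintype.card ι := Finset.card_univ

private lemma sum_eq_fiber_sum {ι : Type*} [Fintype ι] (h : ℕ) (v : ι → ℕ) (hv : ∀ j, v j ≤ h) :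
    ∑ j, v j = ∑ i : Fin h, ((i : ℕ) + 1) * (univ.filter (fun j => v j = (i : ℕ) + 1)).card := by
  have hmaps : ∀ j ∈ (univ : Finset ι), v j ∈ range (h + 1) :=
    fun j _ => mem_range.2 (by have := hv j; omega)
  have h1 : ∑ val ∈ range (h + 1), ∑ j ∈ univ.filter (fun j => v j = val), v j = ∑ j, v j :=
    Finset.sum_fiberwise_of_maps_to hmaps v
  rw [← h1]
  have h2 : ∀ val, ∑ j ∈ univ.filter (fun j => v j = val), v j
      = val * (univ.filter (fun j => v j = val)).card := by
    intro val
    rw [Finset.sum_congr rfl (fun j hj => (Finset.mem_filter.1 hj).2), Finset.sum_const,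
      smul_eq_mul, mul_comm]
  calc ∑ val ∈ range (h + 1), ∑ j ∈ univ.filter (fun j => v j = val), v j
      = ∑ val ∈ range (h + 1), val * (univ.filter (fun j => v j = val)).card :=
        Finset.sum_congr rfl (fun val _ => h2 val)
    _ = ∑ val ∈ range h, (val + 1) * (univ.filter (fun j => v j = val + 1)).card := by
        rw [Finset.sum_range_succ']; simp
    _ = _ := (Fin.sum_univ_eq_sum_range
        (fun val => (val + 1) * (univ.filter (fun j => v j = val + 1)).card) h).symm


/-- **Improved Moore bound for mixed Abelian Cayley graphs** (Theorem 1 of the paper).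
Let `G` be a finite abelian group containing `r_α` involutions `tᵢ`; for each
`s = 1,…,m`, elements `a_{s,1},…,a_{s,r_s}` of order exactly `2s+1` (taken with their
inverses); elements `b₁,…,b_{r_ω}` of order `> 2k+1` (taken with their inverses);
for each `h = 2,…,n`, elements `c_{h,1},…,c_{h,z_h}` of order exactly `h+1` (without
their inverses); and elements `d₁,…,d_{z_ω}` of order `> k+1` (without their
inverses). If the corresponding mixed Cayley graph has diameter at most `k`, then
`|G|` is bounded by the sum, over `i_α ≤ r_α`, `i_ω ≤ r_ω`, tuples
`σ⁽ʰ⁾ ∈ ℕʰ` with `|σ⁽ʰ⁾| ≤ r_h` (`h = 1,…,m`) and `τ⁽ʰ⁾ ∈ ℕʰ` with `|τ⁽ʰ⁾| ≤ z_h`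
(`h = 2,…,n`), of
`C(r_α,i_α)·C(r_ω,i_ω)·2^{i_ω} · Π_h 2^{|σ⁽ʰ⁾|}·r_h!/(σ⁽ʰ⁾₁⋯σ⁽ʰ⁾_h!(r_h−|σ⁽ʰ⁾|)!)
· Π_h z_h!/(τ⁽ʰ⁾₁!⋯τ⁽ʰ⁾_h!(z_h−|τ⁽ʰ⁾|)!)
· C(z_ω + k − i_α − Σ_{h,t} t·σ⁽ʰ⁾_t − Σ_{h,t} t·τ⁽ʰ⁾_t, i_ω + z_ω)`,
with the convention `C(a,b) = 0` for `a` negative or `a < b`. -/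
theorem stmt_0 {G : Type*} [AddCommGroup G] [Fintype G]
    (k m n rα rω zω : ℕ) (r z : ℕ → ℕ)
    (hk : 1 ≤ k) (hm1 : 1 ≤ m) (hmk : m ≤ k) (hn2 : 2 ≤ n) (hnk : n ≤ k)
    (t : Fin rα → G) (a : ℕ → ℕ → G) (b : Fin rω → G) (c : ℕ → ℕ → G)
    (d : Fin zω → G)
    (ht : ∀ i, 2 • t i = 0)
    (ha : ∀ s ∈ Finset.Icc 1 m, ∀ j < r s, addOrderOf (a s j) = 2 * s + 1)
    (hb : ∀ i, 2 * k + 1 < addOrderOf (b i))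
    (hc : ∀ h ∈ Finset.Icc 2 n, ∀ j < z h, addOrderOf (c h j) = h + 1)
    (hd : ∀ i, k + 1 < addOrderOf (d i))
    (hdiam : ∀ g : G, ∃ (ε : Fin rα → ℕ) (α : ℕ → ℕ → ℤ) (β : Fin rω → ℤ)
        (γ : ℕ → ℕ → ℕ) (δ : Fin zω → ℕ),
      g = (∑ i, ε i • t i)
          + (∑ s ∈ Finset.Icc 1 m, ∑ j ∈ Finset.range (r s), α s j • a s j)
          + (∑ j, β j • b j)
          + (∑ h ∈ Finset.Icc 2 n, ∑ j ∈ Finset.range (z h), γ h j • c h j)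
          + (∑ j, δ j • d j) ∧
      (∑ i, ε i)
          + (∑ s ∈ Finset.Icc 1 m, ∑ j ∈ Finset.range (r s), (α s j).natAbs)
          + (∑ j, (β j).natAbs)
          + (∑ h ∈ Finset.Icc 2 n, ∑ j ∈ Finset.range (z h), γ h j)
          + (∑ j, δ j) ≤ k) :
    Fintype.card G ≤
      ∑ iα ∈ Finset.range (rα + 1), ∑ iω ∈ Finset.range (rω + 1),
      ∑ σ ∈ (Finset.Icc 1 m).pi (fun h => (Fintype.piFinset
          (fun _ : Fin h => Finset.range (r h + 1))).filter
          (fun v => ∑ i, v i ≤ r h)),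
      ∑ τ ∈ (Finset.Icc 2 n).pi (fun h => (Fintype.piFinset
          (fun _ : Fin h => Finset.range (z h + 1))).filter
          (fun v => ∑ i, v i ≤ z h)),
        Nat.choose rα iα * Nat.choose rω iω * 2 ^ iω *
        (∏ h ∈ (Finset.Icc 1 m).attach,
          2 ^ (∑ i, σ h.1 h.2 i) *
            (Nat.factorial (r h.1) /
              ((∏ i, Nat.factorial (σ h.1 h.2 i)) *
                Nat.factorial (r h.1 - ∑ i, σ h.1 h.2 i)))) *
        (∏ h ∈ (Finset.Icc 2 n).attach,
          Nat.factorial (z h.1) /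
            ((∏ i, Nat.factorial (τ h.1 h.2 i)) *
              Nat.factorial (z h.1 - ∑ i, τ h.1 h.2 i))) *
        (if iα + (∑ h ∈ (Finset.Icc 1 m).attach, ∑ i : Fin h.1, (i.1 + 1) * σ h.1 h.2 i)
              + (∑ h ∈ (Finset.Icc 2 n).attach, ∑ i : Fin h.1, (i.1 + 1) * τ h.1 h.2 i)
              ≤ zω + k then
            Nat.choose
              (zω + k - (iα
                + (∑ h ∈ (Finset.Icc 1 m).attach, ∑ i : Fin h.1, (i.1 + 1) * σ h.1 h.2 i)
                + (∑ h ∈ (Finset.Icc 2 n).attach, ∑ i : Fin h.1, (i.1 + 1) * τ h.1 h.2 i)))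
              (iω + zω)
          else 0) := by
  classical
  set SB := (Finset.Icc 1 m).pi (fun h => Fintype.piFinset
    (fun _ : Fin (r h) => Finset.Icc (-(h : ℤ)) (h : ℤ))) with hSB
  set SC := Fintype.piFinset (fun _ : Fin rω => Finset.Icc (-(k : ℤ)) (k : ℤ)) with hSC
  set SD := (Finset.Icc 2 n).pi (fun h => Fintype.piFinset
    (fun _ : Fin (z h) => Finset.range (h + 1))) with hSD
  set SE := Fintype.piFinset (fun _ : Fin zω => Finset.range (k + 1)) with hSE
  set wt : (Finset (Fin rα) × ((∀ h ∈ Finset.Icc 1 m, Fin (r h) → ℤ) ×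
      ((Fin rω → ℤ) × ((∀ h ∈ Finset.Icc 2 n, Fin (z h) → ℕ) × (Fin zω → ℕ))))) → ℕ :=
    fun x =>
      (((x.1.card + ∑ h ∈ (Finset.Icc 1 m).attach, ∑ j, (x.2.1 h.1 h.2 j).natAbs)
        + ∑ j, (x.2.2.1 j).natAbs)
        + ∑ h ∈ (Finset.Icc 2 n).attach, ∑ j, x.2.2.2.1 h.1 h.2 j)
        + ∑ j, x.2.2.2.2 j with hwtdef
  set val : (Finset (Fin rα) × ((∀ h ∈ Finset.Icc 1 m, Fin (r h) → ℤ) ×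
      ((Fin rω → ℤ) × ((∀ h ∈ Finset.Icc 2 n, Fin (z h) → ℕ) × (Fin zω → ℕ))))) → G :=
    fun x =>
      (∑ i ∈ x.1, t i)
      + ((∑ h ∈ (Finset.Icc 1 m).attach, ∑ j : Fin (r h.1), x.2.1 h.1 h.2 j • a h.1 j.1)
      + ((∑ j, x.2.2.1 j • b j)
      + ((∑ h ∈ (Finset.Icc 2 n).attach, ∑ j : Fin (z h.1), x.2.2.2.1 h.1 h.2 j • c h.1 j.1)
      + (∑ j, x.2.2.2.2 j • d j)))) with hvaldef
  set big := ((univ : Finset (Finset (Fin rα))) ×ˢ (SB ×ˢ (SC ×ˢ (SD ×ˢ SE)))).filter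
    (fun x => wt x ≤ k) with hbig
  have hcanon : ∀ g : G, ∃ x, x ∈ big ∧ val x = g := by
    intro g
    obtain ⟨ε, α, β, γ, δ, hrep, hwt0⟩ := hdiam g
    refine ⟨⟨univ.filter (fun i => ε i % 2 = 1),
      ⟨fun h _ j => (α h j.1 + h) % (2 * h + 1) - h,
      ⟨β, ⟨fun h _ j => γ h j.1 % (h + 1), δ⟩⟩⟩⟩, ?_, ?_⟩
    · rw [hbig, Finset.mem_filter]
      constructor
      · simp only [Finset.mem_product]
        refine ⟨Finset.mem_univ _, ?_, ?_, ?_, ?_⟩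
        · rw [hSB, Finset.mem_pi]
          intro h hh
          rw [Fintype.mem_piFinset]
          intro j
          obtain ⟨h1, h2, _, _⟩ := bal_spec h (α h j.1)
          rw [Finset.mem_Icc]
          exact ⟨h1, h2⟩
        · rw [hSC, Fintype.mem_piFinset]
          intro j
          rw [Finset.mem_Icc]
          have h2 : (∑ j', (β j').natAbs) ≤ k :=
            le_trans (le_trans (Nat.le_add_left _ _)
              (le_trans (Nat.le_add_right _ _) (Nat.le_add_right _ _))) hwt0
          have h1 : (β j).natAbs ≤ ∑ j', (β j').natAbs :=
            Finset.single_le_sum (f := fun j' => (β j').natAbs)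
              (fun _ _ => Nat.zero_le _) (Finset.mem_univ j)
          omega
        · rw [hSD, Finset.mem_pi]
          intro h hh
          rw [Fintype.mem_piFinset]
          intro j
          rw [Finset.mem_range]
          exact Nat.mod_lt _ (by omega)
        · rw [hSE, Fintype.mem_piFinset]
          intro j
          rw [Finset.mem_range]
          have h2 : (∑ j', δ j') ≤ k := le_trans (Nat.le_add_left _ _) hwt0
          have h1 : δ j ≤ ∑ j', δ j' :=
            Finset.single_le_sum (fun _ _ => Nat.zero_le _) (Finset.mem_univ j)
          omega
      · simp only [hwtdef]
        have e1 : (univ.filter (fun i => ε i % 2 = 1)).card ≤ ∑ i, ε i := by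
          calc (univ.filter (fun i => ε i % 2 = 1)).card
              = ∑ _i ∈ univ.filter (fun i => ε i % 2 = 1), 1 := Finset.card_eq_sum_ones _
            _ ≤ ∑ i ∈ univ.filter (fun i => ε i % 2 = 1), ε i :=
                Finset.sum_le_sum (fun i hi => by
                  have := (Finset.mem_filter.1 hi).2; omega)
            _ ≤ ∑ i, ε i := Finset.sum_le_sum_of_subset (Finset.filter_subset _ _)
        have e2 : (∑ h ∈ (Finset.Icc 1 m).attach,
              ∑ j : Fin (r h.1), ((α h.1 j.1 + h.1) % (2 * h.1 + 1) - (h.1 : ℤ)).natAbs)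
            ≤ ∑ s ∈ Finset.Icc 1 m, ∑ j ∈ Finset.range (r s), (α s j).natAbs := by
          rw [Finset.sum_attach (Finset.Icc 1 m)
            (fun s => ∑ j : Fin (r s), ((α s j.1 + s) % (2 * s + 1) - (s : ℤ)).natAbs)]
          apply Finset.sum_le_sum
          intro s _
          rw [← Fin.sum_univ_eq_sum_range (fun j => (α s j).natAbs) (r s)]
          exact Finset.sum_le_sum (fun j _ => (bal_spec s (α s j.1)).2.2.1)
        have e3 : (∑ h ∈ (Finset.Icc 2 n).attach,
              ∑ j : Fin (z h.1), γ h.1 j.1 % (h.1 + 1))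
            ≤ ∑ hh ∈ Finset.Icc 2 n, ∑ j ∈ Finset.range (z hh), γ hh j := by
          rw [Finset.sum_attach (Finset.Icc 2 n)
            (fun s => ∑ j : Fin (z s), γ s j.1 % (s + 1))]
          apply Finset.sum_le_sum
          intro s _
          rw [← Fin.sum_univ_eq_sum_range (fun j => γ s j) (z s)]
          exact Finset.sum_le_sum (fun j _ => Nat.mod_le _ _)
        refine le_trans ?_ hwt0
        exact Nat.add_le_add (Nat.add_le_add (Nat.add_le_add
          (Nat.add_le_add e1 e2) le_rfl) e3) le_rfl
    · simp only [hvaldef]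
      rw [hrep]
      have q1 : ∑ i, ε i • t i = ∑ i ∈ univ.filter (fun i => ε i % 2 = 1), t i := by
        rw [Finset.sum_filter]
        apply Finset.sum_congr rfl
        intro i _
        rw [nsmul_reduce (t i) 2 (ht i) (ε i)]
        rcases Nat.mod_two_eq_zero_or_one (ε i) with hmod | hmod <;> simp [hmod]
      have q2 : (∑ s ∈ Finset.Icc 1 m, ∑ j ∈ Finset.range (r s), α s j • a s j)
          = ∑ h ∈ (Finset.Icc 1 m).attach,
              ∑ j : Fin (r h.1), ((α h.1 j.1 + h.1) % (2 * h.1 + 1) - (h.1 : ℤ)) • a h.1 j.1 := by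
        rw [Finset.sum_attach (Finset.Icc 1 m)
          (fun s => ∑ j : Fin (r s), ((α s j.1 + s) % (2 * s + 1) - (s : ℤ)) • a s j.1)]
        apply Finset.sum_congr rfl
        intro s hs
        rw [← Fin.sum_univ_eq_sum_range (fun j => α s j • a s j) (r s)]
        apply Finset.sum_congr rfl
        intro j _
        apply zsmul_reduce (a s j.1) (2 * s + 1)
        · rw [← ha s hs j.1 j.2]
          exact addOrderOf_nsmul_eq_zero _
        · exact (bal_spec s (α s j.1)).2.2.2
      have q4 : (∑ h ∈ Finset.Icc 2 n, ∑ j ∈ Finset.range (z h), γ h j • c h j)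
          = ∑ h ∈ (Finset.Icc 2 n).attach,
              ∑ j : Fin (z h.1), (γ h.1 j.1 % (h.1 + 1)) • c h.1 j.1 := by
        rw [Finset.sum_attach (Finset.Icc 2 n)
          (fun s => ∑ j : Fin (z s), (γ s j.1 % (s + 1)) • c s j.1)]
        apply Finset.sum_congr rfl
        intro s hs
        rw [← Fin.sum_univ_eq_sum_range (fun j => γ s j • c s j) (z s)]
        apply Finset.sum_congr rfl
        intro j _
        apply nsmul_reduce (c s j.1) (s + 1)
        rw [← hc s hs j.1 j.2]
        exact addOrderOf_nsmul_eq_zero _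
      rw [q1, q2, q4]
      abel
  have hinj : Fintype.card G ≤ big.card := by
    choose Φ hΦmem hΦval using hcanon
    rw [← Finset.card_univ]
    apply Finset.card_le_card_of_injOn Φ (fun g _ => hΦmem g)
    intro g _ g' _ hgg
    rw [← hΦval g, ← hΦval g', hgg]
  refine le_trans hinj ?_
  set prof : (Finset (Fin rα) × ((∀ h ∈ Finset.Icc 1 m, Fin (r h) → ℤ) ×
      ((Fin rω → ℤ) × ((∀ h ∈ Finset.Icc 2 n, Fin (z h) → ℕ) × (Fin zω → ℕ))))) →
      ℕ × (ℕ × ((∀ h ∈ Finset.Icc 1 m, Fin h → ℕ) × (∀ h ∈ Finset.Icc 2 n, Fin h → ℕ))) :=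
    fun x =>
      (x.1.card, ((univ.filter (fun j => x.2.2.1 j ≠ 0)).card,
        (fun h hh i => (univ.filter
            (fun j : Fin (r h) => (x.2.1 h hh j).natAbs = (i : ℕ) + 1)).card,
         fun h hh i => (univ.filter
            (fun j : Fin (z h) => x.2.2.2.1 h hh j = (i : ℕ) + 1)).card))) with hprofdef
  set I := (Finset.range (rα + 1)) ×ˢ ((Finset.range (rω + 1)) ×ˢ
      (((Finset.Icc 1 m).pi (fun h => (Fintype.piFinset
          (fun _ : Fin h => Finset.range (r h + 1))).filter
          (fun v => ∑ i, v i ≤ r h))) ×ˢ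
       ((Finset.Icc 2 n).pi (fun h => (Fintype.piFinset
          (fun _ : Fin h => Finset.range (z h + 1))).filter
          (fun v => ∑ i, v i ≤ z h))))) with hI
  set Fterm : ℕ × (ℕ × ((∀ h ∈ Finset.Icc 1 m, Fin h → ℕ) ×
      (∀ h ∈ Finset.Icc 2 n, Fin h → ℕ))) → ℕ := fun p =>
    Nat.choose rα p.1 * Nat.choose rω p.2.1 * 2 ^ p.2.1 *
    (∏ h ∈ (Finset.Icc 1 m).attach,
      2 ^ (∑ i, p.2.2.1 h.1 h.2 i) *
        (Nat.factorial (r h.1) /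
          ((∏ i, Nat.factorial (p.2.2.1 h.1 h.2 i)) *
            Nat.factorial (r h.1 - ∑ i, p.2.2.1 h.1 h.2 i)))) *
    (∏ h ∈ (Finset.Icc 2 n).attach,
      Nat.factorial (z h.1) /
        ((∏ i, Nat.factorial (p.2.2.2 h.1 h.2 i)) *
          Nat.factorial (z h.1 - ∑ i, p.2.2.2 h.1 h.2 i))) *
    (if p.1 + (∑ h ∈ (Finset.Icc 1 m).attach, ∑ i : Fin h.1, (i.1 + 1) * p.2.2.1 h.1 h.2 i)
          + (∑ h ∈ (Finset.Icc 2 n).attach, ∑ i : Fin h.1, (i.1 + 1) * p.2.2.2 h.1 h.2 i)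
          ≤ zω + k then
        Nat.choose
          (zω + k - (p.1
            + (∑ h ∈ (Finset.Icc 1 m).attach, ∑ i : Fin h.1, (i.1 + 1) * p.2.2.1 h.1 h.2 i)
            + (∑ h ∈ (Finset.Icc 2 n).attach, ∑ i : Fin h.1, (i.1 + 1) * p.2.2.2 h.1 h.2 i)))
          (p.2.1 + zω)
      else 0) with hFt
  have hmapsto : ∀ x ∈ big, prof x ∈ I := by
    intro x _
    rw [hI, hprofdef]
    simp only [Finset.mem_product]
    refine ⟨?_, ?_, ?_, ?_⟩
    · rw [Finset.mem_range]
      have := Finset.card_le_univ x.1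
      rw [Fintype.card_fin] at this
      omega
    · rw [Finset.mem_range]
      have := Finset.card_le_univ (univ.filter (fun j => x.2.2.1 j ≠ 0))
      rw [Fintype.card_fin] at this
      omega
    · rw [Finset.mem_pi]
      intro h hh
      rw [Finset.mem_filter]
      constructor
      · rw [Fintype.mem_piFinset]
        intro i
        rw [Finset.mem_range]
        have := Finset.card_le_univ (univ.filter
          (fun j : Fin (r h) => (x.2.1 h hh j).natAbs = (i : ℕ) + 1))
        rw [Fintype.card_fin] at this
        omega
      · have := fiber_card_sum_le h (fun j : Fin (r h) => (x.2.1 h hh j).natAbs)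
        rwa [Fintype.card_fin] at this
    · rw [Finset.mem_pi]
      intro h hh
      rw [Finset.mem_filter]
      constructor
      · rw [Fintype.mem_piFinset]
        intro i
        rw [Finset.mem_range]
        have := Finset.card_le_univ (univ.filter
          (fun j : Fin (z h) => x.2.2.2.1 h hh j = (i : ℕ) + 1))
        rw [Fintype.card_fin] at this
        omega
      · have := fiber_card_sum_le h (fun j : Fin (z h) => x.2.2.2.1 h hh j)
        rwa [Fintype.card_fin] at this
  have hfiber : ∀ p ∈ I, (big.filter (fun x => prof x = p)).card ≤ Fterm p := by
    rintro ⟨iα, iω, σ, τ⟩ hpI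
    rw [hI] at hpI
    simp only [Finset.mem_product] at hpI
    obtain ⟨hiα, hiω, hσ, hτ⟩ := hpI
    rw [Finset.mem_range] at hiα hiω
    rw [Finset.mem_pi] at hσ hτ
    set A1 := ∑ h ∈ (Finset.Icc 1 m).attach, ∑ i : Fin h.1, (i.1 + 1) * σ h.1 h.2 i with hA1
    set A2 := ∑ h ∈ (Finset.Icc 2 n).attach, ∑ i : Fin h.1, (i.1 + 1) * τ h.1 h.2 i with hA2
    -- membership data of fiber elements
    have hmem5 : ∀ x ∈ big, x.2.1 ∈ SB ∧ x.2.2.1 ∈ SC ∧ x.2.2.2.1 ∈ SD ∧ x.2.2.2.2 ∈ SE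
        ∧ wt x ≤ k := by
      intro x hx
      rw [hbig, Finset.mem_filter] at hx
      obtain ⟨hx1, hx2⟩ := hx
      simp only [Finset.mem_product] at hx1
      exact ⟨hx1.2.1, hx1.2.2.1, hx1.2.2.2.1, hx1.2.2.2.2, hx2⟩
    have hkey : ∀ x ∈ big.filter (fun x => prof x = (iα, (iω, (σ, τ)))),
        x.1.card = iα ∧
        (∑ h ∈ (Finset.Icc 1 m).attach, ∑ j, (x.2.1 h.1 h.2 j).natAbs) = A1 ∧
        (∑ h ∈ (Finset.Icc 2 n).attach, ∑ j, x.2.2.2.1 h.1 h.2 j) = A2 ∧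
        (univ.filter (fun j => x.2.2.1 j ≠ 0)).card = iω := by
      intro x hx
      rw [Finset.mem_filter] at hx
      obtain ⟨hxbig, hxprof⟩ := hx
      obtain ⟨hSBx, _, hSDx, _, _⟩ := hmem5 x hxbig
      simp only [hprofdef, Prod.mk.injEq] at hxprof
      obtain ⟨p1, p2, p3, p4⟩ := hxprof
      refine ⟨p1, ?_, ?_, p2⟩
      · rw [hA1]
        rw [Finset.sum_congr rfl (fun h (_ : h ∈ (Finset.Icc 1 m).attach) => ?_)]
        have hbound : ∀ j : Fin (r h.1), (x.2.1 h.1 h.2 j).natAbs ≤ h.1 := by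
          intro j
          rw [hSB, Finset.mem_pi] at hSBx
          have := Fintype.mem_piFinset.1 (hSBx h.1 h.2) j
          rw [Finset.mem_Icc] at this
          omega
        rw [sum_eq_fiber_sum h.1 (fun j => (x.2.1 h.1 h.2 j).natAbs) hbound]
        refine Finset.sum_congr rfl (fun i _ => ?_)
        rw [congrFun (congrFun (congrFun p3 h.1) h.2) i]
      · rw [hA2]
        rw [Finset.sum_congr rfl (fun h (_ : h ∈ (Finset.Icc 2 n).attach) => ?_)]
        have hbound : ∀ j : Fin (z h.1), x.2.2.2.1 h.1 h.2 j ≤ h.1 := by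
          intro j
          rw [hSD, Finset.mem_pi] at hSDx
          have := Fintype.mem_piFinset.1 (hSDx h.1 h.2) j
          rw [Finset.mem_range] at this
          omega
        rw [sum_eq_fiber_sum h.1 (fun j => x.2.2.2.1 h.1 h.2 j) hbound]
        refine Finset.sum_congr rfl (fun i _ => ?_)
        rw [congrFun (congrFun (congrFun p4 h.1) h.2) i]
    have hwk : ∀ x ∈ big.filter (fun x => prof x = (iα, (iω, (σ, τ)))),
        (iα + A1 + A2) + ((∑ j, (x.2.2.1 j).natAbs) + ∑ j, x.2.2.2.2 j) ≤ k := by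
      intro x hx
      obtain ⟨p1, pA, pC, _⟩ := hkey x hx
      rw [Finset.mem_filter] at hx
      obtain ⟨_, _, _, _, hxwt⟩ := hmem5 x hx.1
      simp only [hwtdef] at hxwt
      rw [p1, pA, pC] at hxwt
      calc (iα + A1 + A2) + ((∑ j, (x.2.2.1 j).natAbs) + ∑ j, x.2.2.2.2 j)
          = (((iα + A1) + ∑ j, (x.2.2.1 j).natAbs) + A2) + ∑ j, x.2.2.2.2 j := by ring
        _ ≤ k := hxwt
    by_cases hcond : iα + A1 + A2 ≤ zω + k
    · -- main case
      set Pσ := (Finset.Icc 1 m).pi (fun h => (Fintype.piFinset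
          (fun _ : Fin (r h) => Finset.Icc (-(h : ℤ)) (h : ℤ))).filter
          (fun f => ∀ hh : h ∈ Finset.Icc 1 m, ∀ i : Fin h,
            (univ.filter (fun j => (f j).natAbs = (i : ℕ) + 1)).card = σ h hh i)) with hPσdef
      set Pτ := (Finset.Icc 2 n).pi (fun h => (Fintype.piFinset
          (fun _ : Fin (z h) => Finset.range (h + 1))).filter
          (fun f => ∀ hh : h ∈ Finset.Icc 2 n, ∀ i : Fin h,
            (univ.filter (fun j => f j = (i : ℕ) + 1)).card = τ h hh i)) with hPτdef
      set PB := (SC ×ˢ SE).filter (fun pq =>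
        (univ.filter (fun j => pq.1 j ≠ 0)).card = iω ∧
        (iα + A1 + A2) + ((∑ j, (pq.1 j).natAbs) + ∑ j, pq.2 j) ≤ k) with hPBdef
      have hstep : (big.filter (fun x => prof x = (iα, (iω, (σ, τ))))).card
          ≤ (((univ : Finset (Fin rα)).powersetCard iα) ×ˢ (Pσ ×ˢ (Pτ ×ˢ PB))).card := by
        apply Finset.card_le_card_of_injOn
          (fun x => (x.1, (x.2.1, (x.2.2.2.1, (x.2.2.1, x.2.2.2.2)))))
        · intro x hx
          have hx' := hx
          obtain ⟨p1, _, _, p4⟩ := hkey x hx'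
          obtain ⟨hSBx, hSCx, hSDx, hSEx, _⟩ := hmem5 x (Finset.mem_filter.1 hx').1
          simp only [Finset.mem_coe, Finset.mem_product]
          refine ⟨?_, ?_, ?_, ?_⟩
          · exact Finset.mem_powersetCard.2 ⟨Finset.subset_univ _, p1⟩
          · rw [hPσdef, Finset.mem_pi]
            intro h hh
            rw [Finset.mem_filter]
            refine ⟨by rw [hSB, Finset.mem_pi] at hSBx; exact hSBx h hh, ?_⟩
            intro hh' i
            have hxprof := (Finset.mem_filter.1 hx').2
            simp only [hprofdef, Prod.mk.injEq] at hxprof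
            exact congrFun (congrFun (congrFun hxprof.2.2.1 h) hh') i
          · rw [hPτdef, Finset.mem_pi]
            intro h hh
            rw [Finset.mem_filter]
            refine ⟨by rw [hSD, Finset.mem_pi] at hSDx; exact hSDx h hh, ?_⟩
            intro hh' i
            have hxprof := (Finset.mem_filter.1 hx').2
            simp only [hprofdef, Prod.mk.injEq] at hxprof
            exact congrFun (congrFun (congrFun hxprof.2.2.2 h) hh') i
          · rw [hPBdef, Finset.mem_filter]
            exact ⟨Finset.mem_product.2 ⟨hSCx, hSEx⟩, p4, hwk x hx'⟩
        · intro x _ y _ hxy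
          simp only [Prod.mk.injEq] at hxy
          obtain ⟨e1, e2, e3, e4, e5⟩ := hxy
          exact Prod.ext e1 (Prod.ext e2 (Prod.ext e4 (Prod.ext e3 e5)))
      have hPσcard : Pσ.card ≤ ∏ h ∈ (Finset.Icc 1 m).attach,
          2 ^ (∑ i, σ h.1 h.2 i) * (Nat.factorial (r h.1) /
            ((∏ i, Nat.factorial (σ h.1 h.2 i)) *
              Nat.factorial (r h.1 - ∑ i, σ h.1 h.2 i))) := by
        rw [hPσdef, Finset.card_pi,
          ← Finset.prod_attach (Finset.Icc 1 m) (fun h => ((Fintype.piFinset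
            (fun _ : Fin (r h) => Finset.Icc (-(h : ℤ)) (h : ℤ))).filter
            (fun f => ∀ hh : h ∈ Finset.Icc 1 m, ∀ i : Fin h,
              (univ.filter (fun j => (f j).natAbs = (i : ℕ) + 1)).card = σ h hh i)).card)]
        apply Finset.prod_le_prod'
        intro h _
        have hle : ∑ i, σ h.1 h.2 i ≤ r h.1 := by
          have := (Finset.mem_filter.1 (hσ h.1 h.2)).2
          exact this
        have := count_zfun_le h.1 (σ h.1 h.2) (by rwa [Fintype.card_fin])
          ((Fintype.piFinset (fun _ : Fin (r h.1) => Finset.Icc (-(h.1 : ℤ)) (h.1 : ℤ))).filter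
            (fun f => ∀ hh : h.1 ∈ Finset.Icc 1 m, ∀ i : Fin h.1,
              (univ.filter (fun j => (f j).natAbs = (i : ℕ) + 1)).card = σ h.1 hh i))
          (by
            intro f hf j
            have := Fintype.mem_piFinset.1 (Finset.mem_filter.1 hf).1 j
            rw [Finset.mem_Icc] at this
            omega)
          (fun f hf i => (Finset.mem_filter.1 hf).2 h.2 i)
        rwa [Fintype.card_fin] at this
      have hPτcard : Pτ.card ≤ ∏ h ∈ (Finset.Icc 2 n).attach,
          Nat.factorial (z h.1) /
            ((∏ i, Nat.factorial (τ h.1 h.2 i)) *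
              Nat.factorial (z h.1 - ∑ i, τ h.1 h.2 i)) := by
        rw [hPτdef, Finset.card_pi,
          ← Finset.prod_attach (Finset.Icc 2 n) (fun h => ((Fintype.piFinset
            (fun _ : Fin (z h) => Finset.range (h + 1))).filter
            (fun f => ∀ hh : h ∈ Finset.Icc 2 n, ∀ i : Fin h,
              (univ.filter (fun j => f j = (i : ℕ) + 1)).card = τ h hh i)).card)]
        apply Finset.prod_le_prod'
        intro h _
        have hle : ∑ i, τ h.1 h.2 i ≤ z h.1 := (Finset.mem_filter.1 (hτ h.1 h.2)).2
        have := count_nfun_le h.1 (τ h.1 h.2) (by rwa [Fintype.card_fin])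
          ((Fintype.piFinset (fun _ : Fin (z h.1) => Finset.range (h.1 + 1))).filter
            (fun f => ∀ hh : h.1 ∈ Finset.Icc 2 n, ∀ i : Fin h.1,
              (univ.filter (fun j => f j = (i : ℕ) + 1)).card = τ h.1 hh i))
          (by
            intro f hf j
            have := Fintype.mem_piFinset.1 (Finset.mem_filter.1 hf).1 j
            rw [Finset.mem_range] at this
            omega)
          (fun f hf i => (Finset.mem_filter.1 hf).2 h.2 i)
        rwa [Fintype.card_fin] at this
      have hPBcard : PB.card ≤ Nat.choose rω iω *
          (2 ^ iω * Nat.choose (zω + k - (iα + A1 + A2)) (iω + zω)) := by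
        apply count_bd_le
        · intro p hp
          exact ((Finset.mem_filter.1 hp).2).1
        · intro p hp
          exact ((Finset.mem_filter.1 hp).2).2
      calc (big.filter (fun x => prof x = (iα, (iω, (σ, τ))))).card
          ≤ (((univ : Finset (Fin rα)).powersetCard iα) ×ˢ (Pσ ×ˢ (Pτ ×ˢ PB))).card := hstep
        _ = Nat.choose rα iα * (Pσ.card * (Pτ.card * PB.card)) := by
            rw [Finset.card_product, Finset.card_product, Finset.card_product,
              Finset.card_powersetCard, Finset.card_univ, Fintype.card_fin]
        _ ≤ Nat.choose rα iα * ((∏ h ∈ (Finset.Icc 1 m).attach,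
              2 ^ (∑ i, σ h.1 h.2 i) * (Nat.factorial (r h.1) /
                ((∏ i, Nat.factorial (σ h.1 h.2 i)) *
                  Nat.factorial (r h.1 - ∑ i, σ h.1 h.2 i)))) *
            ((∏ h ∈ (Finset.Icc 2 n).attach,
              Nat.factorial (z h.1) /
                ((∏ i, Nat.factorial (τ h.1 h.2 i)) *
                  Nat.factorial (z h.1 - ∑ i, τ h.1 h.2 i))) *
             (Nat.choose rω iω *
              (2 ^ iω * Nat.choose (zω + k - (iα + A1 + A2)) (iω + zω))))) := by
            exact Nat.mul_le_mul_left _ (Nat.mul_le_mul hPσcard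
              (Nat.mul_le_mul hPτcard hPBcard))
        _ = Fterm (iα, (iω, (σ, τ))) := by
            simp only [hFt]
            rw [← hA1, ← hA2, if_pos hcond]
            ring
    · -- empty case
      have hempty : big.filter (fun x => prof x = (iα, (iω, (σ, τ)))) = ∅ := by
        apply Finset.eq_empty_of_forall_notMem
        intro x hx
        have h1 := hwk x hx
        have h2 : iα + A1 + A2 ≤ k := le_trans (Nat.le_add_right _ _) h1
        omega
      rw [hempty, Finset.card_empty]
      exact Nat.zero_le _
  calc big.card = ∑ p ∈ I, (big.filter (fun x => prof x = p)).card :=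
        Finset.card_eq_sum_card_fiberwise hmapsto
    _ ≤ ∑ p ∈ I, Fterm p := Finset.sum_le_sum hfiber
    _ = _ := by
        rw [hI]
        simp only [hFt]
        rw [Finset.sum_product]
        refine Finset.sum_congr rfl (fun iα _ => ?_)
        rw [Finset.sum_product]
        refine Finset.sum_congr rfl (fun iω _ => ?_)
        rw [Finset.sum_product]
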